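/- Let v_a, v_b, v_c be unit vectors in ℝ³ and α_a, α_b, α_c ∈ (0, π/2) such that the pairwise angles satisfy ∠(v_x, v_y) = α_x + α_y for each pair. Writing t_x = tan α_x, the volume of the tetrahedron with vertices o, v_a/cos α_a, v_b/cos α_b, v_c/cos α_c equals (1/3)·√(t_a t_b t_c (t_a + t_b + t_c − t_a t_b t_c)). -/

import Mathlib

open Real MeasureTheory
open scoped RealInnerProductSpace
open scoped ENNReal

private lemma tetra_key_integral (c : ℝ) (n : ℕ) (hn : n ≠ 0) :
    ∫⁻ a in Set.Ici (0:ℝ), (ENNReal.ofReal (c - a)) ^ n / (n.factorial : ℝ≥0∞) =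
      (ENNReal.ofReal c) ^ (n + 1) / ((n + 1).factorial : ℝ≥0∞) := by
  rcases lt_or_ge c 0 with h | hc
  · have h0 : ∀ a ∈ Set.Ici (0:ℝ),
        (ENNReal.ofReal (c - a)) ^ n / (n.factorial : ℝ≥0∞) = 0 := by
      intro a ha
      rw [ENNReal.ofReal_eq_zero.2 (by linarith [Set.mem_Ici.1 ha])]
      simp [zero_pow hn]
    rw [setLIntegral_congr_fun measurableSet_Ici h0]
    simp [ENNReal.ofReal_eq_zero.2 h.le, zero_pow (Nat.succ_ne_zero n)]
  · have hsplit : Set.Ici (0:ℝ) = Set.Icc 0 c ∪ Set.Ioi c := by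
      ext x
      simp only [Set.mem_Ici, Set.mem_union, Set.mem_Icc, Set.mem_Ioi]
      constructor
      · intro hx
        rcases le_or_gt x c with h' | h'
        · exact Or.inl ⟨hx, h'⟩
        · exact Or.inr h'
      · rintro (⟨h1, _⟩ | h1) <;> linarith
    rw [hsplit, lintegral_union measurableSet_Ioi (by
      rw [Set.disjoint_left]; intro x hx hx'
      exact absurd (Set.mem_Icc.1 hx).2 (not_le.2 (Set.mem_Ioi.1 hx')))]
    have hz : ∫⁻ a in Set.Ioi c, (ENNReal.ofReal (c - a)) ^ n / (n.factorial : ℝ≥0∞) = 0 := by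
      rw [setLIntegral_congr_fun measurableSet_Ioi ?_,
        lintegral_zero]
      intro a ha
      beta_reduce
      rw [ENNReal.ofReal_eq_zero.2 (by linarith [Set.mem_Ioi.1 ha])]
      simp [zero_pow hn]
    rw [hz, add_zero]
    have hcongr : ∀ a ∈ Set.Icc (0:ℝ) c,
        (ENNReal.ofReal (c - a)) ^ n / (n.factorial : ℝ≥0∞) =
        ENNReal.ofReal ((c - a) ^ n / n.factorial) := by
      intro a ha
      rw [← ENNReal.ofReal_pow (by linarith [(Set.mem_Icc.1 ha).2]),
        ENNReal.ofReal_div_of_pos (by exact_mod_cast n.factorial_pos), ENNReal.ofReal_natCast]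
    rw [setLIntegral_congr_fun measurableSet_Icc hcongr,
      ← ofReal_integral_eq_lintegral_ofReal]
    · have hint : (∫ x in Set.Icc (0:ℝ) c, (c - x) ^ n / n.factorial)
          = c ^ (n + 1) / (n + 1).factorial := by
        rw [integral_Icc_eq_integral_Ioc, ← intervalIntegral.integral_of_le hc,
          intervalIntegral.integral_div, intervalIntegral.integral_comp_sub_left (fun x => x ^ n) c]
        simp only [sub_zero, sub_self, integral_pow]
        rw [zero_pow (Nat.succ_ne_zero n), sub_zero, Nat.factorial_succ]
        push_cast
        field_simp
      rw [hint, ENNReal.ofReal_div_of_pos (by exact_mod_cast (n+1).factorial_pos),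
        ENNReal.ofReal_pow hc, ENNReal.ofReal_natCast]
    · exact (Continuous.integrableOn_Icc (by continuity))
    · exact ae_restrict_of_forall_mem measurableSet_Icc fun x hx =>
        div_nonneg (pow_nonneg (by linarith [(Set.mem_Icc.1 hx).2]) n) (by positivity)

private lemma tetra_vol_slice2 (c : ℝ) :
    volume {p : ℝ × ℝ | 0 ≤ p.1 ∧ 0 ≤ p.2 ∧ p.1 + p.2 ≤ c} =
      (ENNReal.ofReal c) ^ 2 / 2 := by
  have hTeq : {p : ℝ × ℝ | 0 ≤ p.1 ∧ 0 ≤ p.2 ∧ p.1 + p.2 ≤ c} =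
      {p : ℝ × ℝ | 0 ≤ p.1} ∩ ({p : ℝ × ℝ | 0 ≤ p.2} ∩ {p : ℝ × ℝ | p.1 + p.2 ≤ c}) := by
    ext p; simp [and_assoc]
  have hT : MeasurableSet {p : ℝ × ℝ | 0 ≤ p.1 ∧ 0 ≤ p.2 ∧ p.1 + p.2 ≤ c} := by
    rw [hTeq]
    exact ((isClosed_le continuous_const continuous_fst).inter
      ((isClosed_le continuous_const continuous_snd).inter
        (isClosed_le (continuous_fst.add continuous_snd) continuous_const))).measurableSet
  rw [MeasureTheory.Measure.volume_eq_prod, MeasureTheory.Measure.prod_apply hT]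
  have hvol : (fun a => volume (Prod.mk a ⁻¹' {p : ℝ × ℝ | 0 ≤ p.1 ∧ 0 ≤ p.2 ∧ p.1 + p.2 ≤ c}))
      = Set.indicator (Set.Ici (0:ℝ)) (fun a => ENNReal.ofReal (c - a)) := by
    funext a
    by_cases ha : 0 ≤ a
    · have hpre : Prod.mk a ⁻¹' {p : ℝ × ℝ | 0 ≤ p.1 ∧ 0 ≤ p.2 ∧ p.1 + p.2 ≤ c}
          = Set.Icc 0 (c - a) := by
        ext b
        simp only [Set.mem_preimage, Set.mem_setOf_eq, Set.mem_Icc, ha, true_and]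
        constructor
        · rintro ⟨h1, h2⟩; exact ⟨h1, by linarith⟩
        · rintro ⟨h1, h2⟩; exact ⟨h1, by linarith⟩
      rw [hpre, Set.indicator_of_mem (Set.mem_Ici.2 ha), Real.volume_Icc, sub_zero]
    · have hpre : Prod.mk a ⁻¹' {p : ℝ × ℝ | 0 ≤ p.1 ∧ 0 ≤ p.2 ∧ p.1 + p.2 ≤ c} = ∅ := by
        ext b; simp only [Set.mem_preimage, Set.mem_setOf_eq, Set.mem_empty_iff_false, iff_false]
        rintro ⟨h1, _⟩; exact ha h1
      rw [hpre, Set.indicator_of_notMem (by simpa using ha), measure_empty]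
  rw [hvol]
  exact (lintegral_indicator measurableSet_Ici _).trans
    (by simpa [Nat.factorial] using tetra_key_integral c 1 one_ne_zero)

private lemma tetra_vol_S2 (c : ℝ) :
    volume {y : Fin 2 → ℝ | (∀ i, 0 ≤ y i) ∧ ∑ i, y i ≤ c} = (ENNReal.ofReal c) ^ 2 / 2 := by
  rw [← tetra_vol_slice2 c,
    ← (volume_preserving_finTwoArrow ℝ).measure_preimage_equiv]
  congr 1
  ext y
  simp [MeasurableEquiv.finTwoArrow, Fin.sum_univ_two, Fin.forall_fin_two, and_assoc]

private lemma tetra_vol_slice3 :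
    volume {p : ℝ × (Fin 2 → ℝ) | 0 ≤ p.1 ∧ (∀ i, 0 ≤ p.2 i) ∧ p.1 + ∑ i, p.2 i ≤ 1} =
      (6 : ℝ≥0∞)⁻¹ := by
  set T := {p : ℝ × (Fin 2 → ℝ) | 0 ≤ p.1 ∧ (∀ i, 0 ≤ p.2 i) ∧ p.1 + ∑ i, p.2 i ≤ 1} with hTdef
  have hsumcont : Continuous fun p : ℝ × (Fin 2 → ℝ) => p.1 + ∑ i, p.2 i :=
    continuous_fst.add (continuous_finset_sum _ fun i _ => (continuous_apply i).comp continuous_snd)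
  have hT : MeasurableSet T := by
    have : T = {p : ℝ × (Fin 2 → ℝ) | 0 ≤ p.1} ∩
        ((⋂ i, {p : ℝ × (Fin 2 → ℝ) | 0 ≤ p.2 i}) ∩
          {p : ℝ × (Fin 2 → ℝ) | p.1 + ∑ i, p.2 i ≤ 1}) := by
      ext p; simp [hTdef, and_assoc, forall_and]
    rw [this]
    exact ((isClosed_le continuous_const continuous_fst).inter
      ((isClosed_iInter fun i => isClosed_le continuous_const
          ((continuous_apply i).comp continuous_snd)).inter
        (isClosed_le hsumcont continuous_const))).measurableSet
  rw [MeasureTheory.Measure.volume_eq_prod, MeasureTheory.Measure.prod_apply hT]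
  have hvol : (fun a => volume (Prod.mk a ⁻¹' T))
      = Set.indicator (Set.Ici (0:ℝ)) (fun a => (ENNReal.ofReal (1 - a)) ^ 2 / 2) := by
    funext a
    by_cases ha : 0 ≤ a
    · have hpre : Prod.mk a ⁻¹' T
          = {y : Fin 2 → ℝ | (∀ i, 0 ≤ y i) ∧ ∑ i, y i ≤ 1 - a} := by
        ext y
        simp only [hTdef, Set.mem_preimage, Set.mem_setOf_eq, ha, true_and]
        constructor
        · rintro ⟨h1, h2⟩; exact ⟨h1, by linarith⟩
        · rintro ⟨h1, h2⟩; exact ⟨h1, by linarith⟩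
      rw [hpre, Set.indicator_of_mem (Set.mem_Ici.2 ha), tetra_vol_S2]
    · have hpre : Prod.mk a ⁻¹' T = ∅ := by
        ext y; simp only [hTdef, Set.mem_preimage, Set.mem_setOf_eq, Set.mem_empty_iff_false,
          iff_false]
        rintro ⟨h1, _⟩; exact ha h1
      rw [hpre, Set.indicator_of_notMem (by simpa using ha), measure_empty]
  rw [hvol]
  refine (lintegral_indicator measurableSet_Ici _).trans ?_
  have k := tetra_key_integral 1 2 two_ne_zero
  norm_num [Nat.factorial] at k ⊢
  rw [k]

private lemma tetra_vol_S3 :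
    volume {x : Fin 3 → ℝ | (∀ i, 0 ≤ x i) ∧ ∑ i, x i ≤ 1} = (6 : ℝ≥0∞)⁻¹ := by
  rw [← tetra_vol_slice3,
    ← (volume_preserving_piFinSuccAbove (fun _ : Fin 3 => ℝ) 0).measure_preimage_equiv]
  congr 1
  ext x
  simp [MeasurableEquiv.piFinSuccAbove, Fin.sum_univ_succ, Fin.forall_fin_succ, and_assoc,
    Fin.succAbove_zero, Fin.tail]

private lemma tetra_hull_eq_simplex :
    convexHull ℝ ({0, EuclideanSpace.single 0 (1:ℝ), EuclideanSpace.single 1 (1:ℝ),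
        EuclideanSpace.single 2 (1:ℝ)} : Set (EuclideanSpace ℝ (Fin 3))) =
      {x : EuclideanSpace ℝ (Fin 3) | (∀ i, 0 ≤ x i) ∧ ∑ i, x i ≤ 1} := by
  apply Set.Subset.antisymm
  · apply convexHull_min
    · rintro x (rfl | rfl | rfl | rfl)
      · refine ⟨fun i => le_refl 0, by norm_num⟩
      all_goals
        refine ⟨fun i => ?_, ?_⟩
        · rw [EuclideanSpace.single_apply]; positivity
        · simp [EuclideanSpace.single_apply]
    · rintro x ⟨hx0, hxs⟩ y ⟨hy0, hys⟩ a b ha hb hab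
      constructor
      · intro i
        have : (a • x + b • y) i = a * x i + b * y i := by
          simp [PiLp.add_apply, PiLp.smul_apply, smul_eq_mul]
        rw [this]
        have := hx0 i; have := hy0 i; positivity
      · have : ∑ i, (a • x + b • y) i = a * ∑ i, x i + b * ∑ i, y i := by
          simp [PiLp.add_apply, PiLp.smul_apply, smul_eq_mul, Finset.sum_add_distrib,
            Finset.mul_sum]
        rw [this]
        nlinarith [mul_le_mul_of_nonneg_left hxs ha, mul_le_mul_of_nonneg_left hys hb]
  · rintro x ⟨hx0, hxs⟩
    have hw : ∑ i, (![1 - ∑ j, x j, x 0, x 1, x 2] : Fin 4 → ℝ) i = 1 := by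
      simp [Fin.sum_univ_four, Fin.sum_univ_three]; ring
    have := Finset.centerMass_mem_convexHull (t := (Finset.univ : Finset (Fin 4)))
      (w := ![1 - ∑ j, x j, x 0, x 1, x 2])
      (z := ![0, EuclideanSpace.single 0 (1:ℝ), EuclideanSpace.single 1 (1:ℝ),
        EuclideanSpace.single 2 (1:ℝ)])
      (s := ({0, EuclideanSpace.single 0 (1:ℝ), EuclideanSpace.single 1 (1:ℝ),
        EuclideanSpace.single 2 (1:ℝ)} : Set (EuclideanSpace ℝ (Fin 3)))) ?_
        (by rw [hw]; norm_num) ?_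
    · rwa [Finset.centerMass_eq_of_sum_1 _ _ hw,
        show ∑ i, (![1 - ∑ j, x j, x 0, x 1, x 2] : Fin 4 → ℝ) i •
          (![0, EuclideanSpace.single 0 (1:ℝ), EuclideanSpace.single 1 (1:ℝ),
            EuclideanSpace.single 2 (1:ℝ)] : Fin 4 → EuclideanSpace ℝ (Fin 3)) i = x
          from ?_] at this
      ext j
      simp only [Fin.sum_univ_four, Matrix.cons_val_zero, Matrix.cons_val_one, Matrix.head_cons,
        Matrix.cons_val_two, Matrix.tail_cons, Matrix.cons_val_three]
      have : ∀ (k : Fin 3) (r : ℝ), (r • EuclideanSpace.single k (1:ℝ)) j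
          = r * (if j = k then 1 else 0) := by
        intro k r; simp [PiLp.smul_apply, smul_eq_mul, EuclideanSpace.single_apply]
      simp only [PiLp.add_apply, PiLp.smul_apply, smul_eq_mul, smul_zero, PiLp.zero_apply, this]
      fin_cases j <;> norm_num [Fin.ext_iff] <;> rfl
    · intro i _
      fin_cases i <;> simp [hx0, Fin.sum_univ_three]
      · have h0 := hx0 0; have h1 := hx0 1; have h2 := hx0 2
        rw [Fin.sum_univ_three] at hxs; linarith
    · intro i _
      fin_cases i <;> simp [Set.mem_insert_iff]

private lemma tetra_vol_SE :
    volume {x : EuclideanSpace ℝ (Fin 3) | (∀ i, 0 ≤ x i) ∧ ∑ i, x i ≤ 1} = (6:ℝ≥0∞)⁻¹ := by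
  rw [← tetra_vol_S3,
    ← (EuclideanSpace.volume_preserving_symm_measurableEquiv_toLp (Fin 3)).measure_preimage_equiv]
  rfl

/-- If `v_a, v_b, v_c` are unit vectors in `ℝ³` with pairwise angles
`α_x + α_y`, `α_x ∈ (0, π/2)`, `α_a + α_b + α_c < π`, then the volume of the
tetrahedron with vertices `o, v_a/cos α_a, v_b/cos α_b, v_c/cos α_c` equals
`(1/3) √(t_a t_b t_c (t_a + t_b + t_c − t_a t_b t_c))`, where `t_x = tan α_x`. -/
theorem tetrahedron_volume (va vb vc : EuclideanSpace ℝ (Fin 3))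
    (hva : ‖va‖ = 1) (hvb : ‖vb‖ = 1) (hvc : ‖vc‖ = 1)
    (αa αb αc : ℝ)
    (ha : αa ∈ Set.Ioo 0 (π / 2)) (hb : αb ∈ Set.Ioo 0 (π / 2))
    (hc : αc ∈ Set.Ioo 0 (π / 2))
    (hab : Real.arccos ⟪va, vb⟫ = αa + αb)
    (hbc : Real.arccos ⟪vb, vc⟫ = αb + αc)
    (hac : Real.arccos ⟪va, vc⟫ = αa + αc)
    (hsum : αa + αb + αc < π) :
    (volume (convexHull ℝ
        ({0, (Real.cos αa)⁻¹ • va, (Real.cos αb)⁻¹ • vb,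
          (Real.cos αc)⁻¹ • vc} : Set (EuclideanSpace ℝ (Fin 3))))).toReal =
      (1 / 3) * Real.sqrt (Real.tan αa * Real.tan αb * Real.tan αc *
        (Real.tan αa + Real.tan αb + Real.tan αc -
          Real.tan αa * Real.tan αb * Real.tan αc)) := by
  obtain ⟨ha1, ha2⟩ := ha
  obtain ⟨hb1, hb2⟩ := hb
  obtain ⟨hc1, hc2⟩ := hc
  have hpi := Real.pi_pos
  have hca : Real.cos αa ≠ 0 := ne_of_gt (Real.cos_pos_of_mem_Ioo ⟨by linarith, ha2⟩)
  have hcb : Real.cos αb ≠ 0 := ne_of_gt (Real.cos_pos_of_mem_Ioo ⟨by linarith, hb2⟩)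
  have hcc : Real.cos αc ≠ 0 := ne_of_gt (Real.cos_pos_of_mem_Ioo ⟨by linarith, hc2⟩)
  -- inner products of the unit vectors
  have inner_eq : ∀ (u v : EuclideanSpace ℝ (Fin 3)), ‖u‖ = 1 → ‖v‖ = 1 →
      ∀ θ : ℝ, Real.arccos ⟪u, v⟫ = θ → ⟪u, v⟫ = Real.cos θ := by
    intro u v hu hv θ hθ
    have h1 : |⟪u, v⟫| ≤ 1 := by simpa [hu, hv] using abs_real_inner_le_norm u v
    rw [← hθ, Real.cos_arccos (by linarith [abs_le.1 h1]) (by linarith [abs_le.1 h1])]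
  have hvab : ⟪va, vb⟫ = Real.cos (αa + αb) := inner_eq va vb hva hvb _ hab
  have hvbc : ⟪vb, vc⟫ = Real.cos (αb + αc) := inner_eq vb vc hvb hvc _ hbc
  have hvac : ⟪va, vc⟫ = Real.cos (αa + αc) := inner_eq va vc hva hvc _ hac
  have hvaa : ⟪va, va⟫ = 1 := by rw [real_inner_self_eq_norm_sq, hva]; norm_num
  have hvbb : ⟪vb, vb⟫ = 1 := by rw [real_inner_self_eq_norm_sq, hvb]; norm_num
  have hvcc : ⟪vc, vc⟫ = 1 := by rw [real_inner_self_eq_norm_sq, hvc]; norm_num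
  set w : Fin 3 → EuclideanSpace ℝ (Fin 3) :=
    ![(Real.cos αa)⁻¹ • va, (Real.cos αb)⁻¹ • vb, (Real.cos αc)⁻¹ • vc] with hwdef
  set M : Matrix (Fin 3) (Fin 3) ℝ := Matrix.of (fun i j => w j i) with hMdef
  set L : EuclideanSpace ℝ (Fin 3) →ₗ[ℝ] EuclideanSpace ℝ (Fin 3) :=
    Matrix.toEuclideanLin M with hLdef
  have hLe : ∀ j, L (EuclideanSpace.single j (1:ℝ)) = w j := by
    intro j
    ext i
    rw [hLdef]
    simp [Matrix.toEuclideanLin_apply, hMdef, Matrix.mulVec, dotProduct,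
      EuclideanSpace.single_apply, Finset.sum_ite_eq, mul_comm]
  have himg : ({0, (Real.cos αa)⁻¹ • va, (Real.cos αb)⁻¹ • vb, (Real.cos αc)⁻¹ • vc} :
      Set (EuclideanSpace ℝ (Fin 3)))
      = L '' {0, EuclideanSpace.single 0 (1:ℝ), EuclideanSpace.single 1 (1:ℝ),
          EuclideanSpace.single 2 (1:ℝ)} := by
    simp only [Set.image_insert_eq, Set.image_singleton, map_zero, hLe]
    rfl
  rw [himg, ← LinearMap.image_convexHull, tetra_hull_eq_simplex,
    Measure.addHaar_image_linearMap, tetra_vol_SE]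
  have hdetL : LinearMap.det L = M.det := by
    rw [hLdef, Matrix.toEuclideanLin_eq_toLin, LinearMap.det_toLin]
  -- Gram matrix
  set ta := Real.tan αa
  set tb := Real.tan αb
  set tc := Real.tan αc
  have entry : ∀ i j, (M.transpose * M) i j = ⟪w i, w j⟫ := by
    intro i j
    rw [Matrix.mul_apply, PiLp.inner_apply]
    simp [hMdef, Matrix.transpose_apply, mul_comm]
  have diag : ∀ (v : EuclideanSpace ℝ (Fin 3)) (α : ℝ), ⟪v, v⟫ = 1 → Real.cos α ≠ 0 →
      ⟪(Real.cos α)⁻¹ • v, (Real.cos α)⁻¹ • v⟫ = 1 + Real.tan α ^ 2 := by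
    intro v α hv hcα
    rw [real_inner_smul_left, real_inner_smul_right, hv, Real.tan_eq_sin_div_cos]
    field_simp
    nlinarith [Real.sin_sq_add_cos_sq α]
  have offd : ∀ (u v : EuclideanSpace ℝ (Fin 3)) (α β : ℝ), ⟪u, v⟫ = Real.cos (α + β) →
      Real.cos α ≠ 0 → Real.cos β ≠ 0 →
      ⟪(Real.cos α)⁻¹ • u, (Real.cos β)⁻¹ • v⟫ = 1 - Real.tan α * Real.tan β := by
    intro u v α β huv hcα hcβ
    rw [real_inner_smul_left, real_inner_smul_right, huv, Real.cos_add,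
      Real.tan_eq_sin_div_cos, Real.tan_eq_sin_div_cos]
    field_simp
  have hMTM : M.transpose * M = Matrix.of !![1 + ta^2, 1 - ta*tb, 1 - ta*tc;
      1 - ta*tb, 1 + tb^2, 1 - tb*tc; 1 - ta*tc, 1 - tb*tc, 1 + tc^2] := by
    ext i j
    rw [entry]
    fin_cases i <;> fin_cases j <;>
      simp only [hwdef, Matrix.cons_val_zero, Matrix.cons_val_one, Matrix.head_cons,
        Matrix.cons_val_two, Matrix.tail_cons, Matrix.of_apply, Matrix.cons_val']
    · exact diag va αa hvaa hca
    · exact offd va vb αa αb hvab hca hcb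
    · exact offd va vc αa αc hvac hca hcc
    · rw [real_inner_comm]; exact offd va vb αa αb hvab hca hcb
    · exact diag vb αb hvbb hcb
    · exact offd vb vc αb αc hvbc hcb hcc
    · rw [real_inner_comm]; exact offd va vc αa αc hvac hca hcc
    · rw [real_inner_comm]; exact offd vb vc αb αc hvbc hcb hcc
    · exact diag vc αc hvcc hcc
  have hdet2 : M.det ^ 2 = 4 * (ta * tb * tc * (ta + tb + tc - ta * tb * tc)) := by
    have h : M.det ^ 2 = (M.transpose * M).det := by
      rw [Matrix.det_mul, Matrix.det_transpose, sq]
    rw [h, hMTM]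
    rw [show ∀ X : Matrix (Fin 3) (Fin 3) ℝ, Matrix.of X = X from fun _ => rfl]
    simp [Matrix.det_fin_three]
    ring
  -- final computation
  have habs : |LinearMap.det L| = 2 * Real.sqrt (ta * tb * tc * (ta + tb + tc - ta * tb * tc)) := by
    rw [hdetL, ← Real.sqrt_sq_eq_abs, hdet2,
      show (4 : ℝ) * (ta * tb * tc * (ta + tb + tc - ta * tb * tc))
        = 2^2 * (ta * tb * tc * (ta + tb + tc - ta * tb * tc)) by norm_num,
      Real.sqrt_mul (by positivity), Real.sqrt_sq (by norm_num)]
  rw [ENNReal.toReal_mul, ENNReal.toReal_ofReal (abs_nonneg _), habs]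
  norm_num
  ring
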